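/- Let $d_1, d_2, d_3$ be the generators of a pseudosymmetric numerical semigroup $S(d^3)$, with $\sigma_1 = d_1+d_2+d_3$. Suppose the syzygy degrees are $e_1 = d_1+d_2+F/2$, $e_2 = d_2+d_3+F/2$, $e_3 = d_3+d_1+F/2$, $q_1 = F/2 + \sigma_1$, $q_2 = F + \sigma_1$ for some even positive integer $F$, and they satisfy $e_1^2+e_2^2+e_3^2 = q_1^2+q_2^2 - 2 d_1 d_2 d_3$. Then $F = -\sigma_1 + \sqrt{\sigma_1^2 - 4(d_1 d_2 + d_2 d_3 + d_3 d_1) + 4 d_1 d_2 d_3}$. -/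
import Mathlib


/-- For a pseudosymmetric 3-generated numerical semigroup, the sum-of-squares
identity of Theorem 1 applied to the syzygy degrees
`e₁ = d₁+d₂+F/2, e₂ = d₂+d₃+F/2, e₃ = d₃+d₁+F/2, q₁ = F/2+σ₁, q₂ = F+σ₁`
determines the Frobenius number `F` via formula (x1). -/
theorem pseudosymmetric_frobenius_formula (d1 d2 d3 F : ℕ)
    (hF : Even F) (hFpos : 0 < F)
    (hsq : ((d1 + d2 + F / 2 : ℕ) : ℤ) ^ 2 + ((d2 + d3 + F / 2 : ℕ) : ℤ) ^ 2
          + ((d3 + d1 + F / 2 : ℕ) : ℤ) ^ 2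
        = ((F / 2 + (d1 + d2 + d3) : ℕ) : ℤ) ^ 2
          + ((F + (d1 + d2 + d3) : ℕ) : ℤ) ^ 2 - 2 * d1 * d2 * d3) :
    (F : ℝ) = -((d1 : ℝ) + d2 + d3)
      + Real.sqrt (((d1 : ℝ) + d2 + d3) ^ 2
          - 4 * ((d1 : ℝ) * d2 + (d2 : ℝ) * d3 + (d3 : ℝ) * d1)
          + 4 * d1 * d2 * d3) := by
  obtain ⟨k, hk⟩ := hF
  subst hk
  have hdiv : (k + k) / 2 = k := by omega
  rw [hdiv] at hsq
  push_cast at hsq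
  have key : (((k + k : ℕ) : ℤ) + d1 + d2 + d3) ^ 2
      = ((d1 : ℤ) + d2 + d3) ^ 2
        - 4 * ((d1 : ℤ) * d2 + (d2 : ℤ) * d3 + (d3 : ℤ) * d1)
        + 4 * d1 * d2 * d3 := by
    push_cast
    nlinarith [hsq]
  have keyR : ((d1 : ℝ) + d2 + d3) ^ 2
        - 4 * ((d1 : ℝ) * d2 + (d2 : ℝ) * d3 + (d3 : ℝ) * d1)
        + 4 * d1 * d2 * d3
      = (((k + k : ℕ) : ℝ) + d1 + d2 + d3) ^ 2 := by
    have := congrArg (fun z : ℤ => (z : ℝ)) key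
    push_cast at this ⊢
    linarith [this]
  rw [keyR, Real.sqrt_sq (by positivity)]
  push_cast
  ring
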